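/- If p and q are probability measures with p absolutely continuous with respect to q and the Radon–Nikodym derivative dp/dq lies in the interval [Λ⁻¹, Λ] q-almost everywhere for some Λ ≥ 1, then the total variation distance satisfies TV(p,q) ≤ (Λ − 1)/(Λ + 1). -/

import Mathlib

open MeasureTheory

/-- Total variation distance: TV(p,q) = (1/2) ∫ |dp - dq|. -/
noncomputable def tvDist {α : Type*} [MeasurableSpace α] (p q : Measure α)
    [IsFiniteMeasure p] [IsFiniteMeasure q] : ℝ :=
  ((p.toSignedMeasure - q.toSignedMeasure).totalVariation Set.univ).toReal / 2

theorem stmt0 {α : Type*} [MeasurableSpace α] (p q : Measure α)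
    [IsProbabilityMeasure p] [IsProbabilityMeasure q] (Λ : ℝ) (hΛ : 1 ≤ Λ)
    (hac : p ≪ q)
    (hlr : ∀ᵐ x ∂q, (p.rnDeriv q x).toReal ∈ Set.Icc Λ⁻¹ Λ) :
    tvDist p q ≤ (Λ - 1) / (Λ + 1) := by
  set c := (Λ - 1) / (Λ + 1) with hc
  have hΛ0 : (0:ℝ) < Λ := lt_of_lt_of_le one_pos hΛ
  have hΛ1 : (0:ℝ) < Λ + 1 := by linarith
  set h : α → ℝ := fun x => (p.rnDeriv q x).toReal with hh
  have hint : Integrable h q := Measure.integrable_toReal_rnDeriv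
  have hint1 : Integrable (fun x => h x - 1) q := hint.sub (integrable_const 1)
  have hint2 : Integrable (fun x => c * (h x + 1)) q :=
    ((hint.add (integrable_const 1)).const_mul c)
  have hae : ∀ᵐ x ∂q, |h x - 1| ≤ c * (h x + 1) := by
    filter_upwards [hlr] with x hx
    obtain ⟨hx1, hx2⟩ := hx
    have h1x : 1 ≤ h x * Λ := by
      have := mul_le_mul_of_nonneg_right hx1 hΛ0.le
      rwa [inv_mul_cancel₀ hΛ0.ne'] at this
    refine abs_le.mpr ⟨?_, ?_⟩
    · rw [neg_le, hc, div_mul_eq_mul_div, le_div_iff₀ hΛ1]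
      nlinarith
    · rw [hc, div_mul_eq_mul_div, le_div_iff₀ hΛ1]
      nlinarith
  set s := p.toSignedMeasure - q.toSignedMeasure with hs
  have key : ∀ B : Set α, MeasurableSet B →
      |s B| ≤ c * ((p B).toReal + (q B).toReal) := by
    intro B hB
    have hsB : s B = (p B).toReal - (q B).toReal := by
      rw [hs, VectorMeasure.sub_apply, Measure.toSignedMeasure_apply_measurable hB,
        Measure.toSignedMeasure_apply_measurable hB]
      rfl
    have hpB : (p B).toReal = ∫ x in B, h x ∂q :=
      (Measure.setIntegral_toReal_rnDeriv hac B).symm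
    have hqB : (q B).toReal = ∫ x in B, (1:ℝ) ∂q := by
      simp [Measure.real]
    have h1 : s B = ∫ x in B, (h x - 1) ∂q := by
      rw [hsB, hpB, hqB, integral_sub hint.integrableOn (integrable_const 1).integrableOn]
    have h2 : |∫ x in B, (h x - 1) ∂q| ≤ ∫ x in B, |h x - 1| ∂q := by
      simpa [Real.norm_eq_abs] using
        norm_integral_le_integral_norm (μ := q.restrict B) (fun x => h x - 1)
    have h3 : ∫ x in B, |h x - 1| ∂q ≤ ∫ x in B, c * (h x + 1) ∂q := by
      refine integral_mono_ae hint1.abs.integrableOn hint2.integrableOn ?_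
      exact ae_restrict_of_ae hae
    have h4 : ∫ x in B, c * (h x + 1) ∂q = c * ((p B).toReal + (q B).toReal) := by
      rw [integral_const_mul, integral_add hint.integrableOn (integrable_const 1).integrableOn,
        ← hpB, ← hqB]
    rw [h1]
    calc |∫ x in B, (h x - 1) ∂q| ≤ ∫ x in B, |h x - 1| ∂q := h2
      _ ≤ ∫ x in B, c * (h x + 1) ∂q := h3
      _ = c * ((p B).toReal + (q B).toReal) := h4
  obtain ⟨i, hi₁, hi₂, hi₃, hμ, hν⟩ := s.toJordanDecomposition_spec
  have hTV : (s.totalVariation Set.univ).toReal = s i + (- s iᶜ) := by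
    rw [SignedMeasure.totalVariation, Measure.add_apply, hμ, hν,
      SignedMeasure.toMeasureOfZeroLE_apply _ hi₂ hi₁ MeasurableSet.univ,
      SignedMeasure.toMeasureOfLEZero_apply _ hi₃ hi₁.compl MeasurableSet.univ,
      ENNReal.toReal_add ENNReal.coe_ne_top ENNReal.coe_ne_top]
    simp [Set.inter_univ]
  have hpc : (p i).toReal + (p iᶜ).toReal = 1 := by
    rw [← ENNReal.toReal_add (measure_ne_top p i) (measure_ne_top p iᶜ),
      measure_add_measure_compl hi₁, measure_univ, ENNReal.toReal_one]
  have hqc : (q i).toReal + (q iᶜ).toReal = 1 := by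
    rw [← ENNReal.toReal_add (measure_ne_top q i) (measure_ne_top q iᶜ),
      measure_add_measure_compl hi₁, measure_univ, ENNReal.toReal_one]
  have h5 : s i ≤ c * ((p i).toReal + (q i).toReal) :=
    (le_abs_self _).trans (key i hi₁)
  have h6 : - s iᶜ ≤ c * ((p iᶜ).toReal + (q iᶜ).toReal) :=
    (neg_le_abs _).trans (key iᶜ hi₁.compl)
  have : tvDist p q = (s i + (- s iᶜ)) / 2 := by
    rw [tvDist, ← hs, hTV]
  rw [this]
  rw [div_le_iff₀ (by norm_num : (0:ℝ) < 2)]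
  calc s i + (- s iᶜ) ≤ c * ((p i).toReal + (q i).toReal)
        + c * ((p iᶜ).toReal + (q iᶜ).toReal) := add_le_add h5 h6
    _ = c * 2 := by rw [← mul_add]; congr 1; linarith
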